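/- Minimum initial charges via the reversed graph (Corollary 2): let G = (V, A, c) be a finite weighted directed graph and B > 0. Then for every pair of vertices s, t ∈ V, the minimum initial charge β_B(s, t) required at s for getting to t equals the energetic cost of traveling from t to s in the reversed graph: β_B(s, t) = δ_B^{←G}(t, s). -/
import Mathlib


open scoped Classical

/-- The clamped addition `x ⊕_B y = [x + y]₀ᴮ` on `ℝ ∪ {∞}` (modeled inside `EReal`;
inputs are never `⊥`). -/
noncomputable def eplus (B : ℝ) (x y : EReal) : EReal :=
  if x + y < 0 then 0 else if x + y ≤ (B : EReal) then x + y else ⊤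

/-- `batt B b cst i` is the charge `b_i` of the battery after traversing the first `i`
arcs of a path whose `i`-th arc (0-indexed) has cost `cst i`, starting from charge `b`. -/
noncomputable def batt (B b : ℝ) (cst : ℕ → ℝ) : ℕ → ℝ
  | 0 => b
  | i + 1 => min (batt B b cst i - cst i) B

/-- The path with arc costs `cst 0, …, cst (k-1)` is traversable from initial charge `b`. -/
def Trav (B b : ℝ) (cst : ℕ → ℝ) (k : ℕ) : Prop :=
  ∀ i, i < k → cst i ≤ batt B b cst i

/-- The energetic cost `d_{B,b}(P) = b - b_k` of a path with arc costs
`cst 0, …, cst (k-1)`, or `∞` if not traversable from initial charge `b`. -/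
noncomputable def dE (B b : ℝ) (cst : ℕ → ℝ) (k : ℕ) : EReal :=
  if Trav B b cst k then ((b - batt B b cst k : ℝ) : EReal) else ⊤

/-- `u 0, u 1, …, u k` is a path in the graph with arc relation `Arc`. -/
def IsPath {V : Type*} (Arc : V → V → Prop) (u : ℕ → V) (k : ℕ) : Prop :=
  ∀ i, i < k → Arc (u i) (u (i + 1))

/-- The energetic cost `δ_{B,b}(s,t)`: the minimum of `d_{B,b}(P)` over all `s`–`t`
paths `P` (`∞` if there is none). -/
noncomputable def deltaE {V : Type*} (Arc : V → V → Prop) (c : V → V → ℝ)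
    (B b : ℝ) (s t : V) : EReal :=
  sInf { x : EReal | ∃ (u : ℕ → V) (k : ℕ), IsPath Arc u k ∧ u 0 = s ∧ u k = t ∧
    x = dE B b (fun i => c (u i) (u (i + 1))) k }

/-- The standard distance `δ(s,t)`: the infimum of total costs of `s`–`t` paths. -/
noncomputable def distE {V : Type*} (Arc : V → V → Prop) (c : V → V → ℝ)
    (s t : V) : EReal :=
  sInf { x : EReal | ∃ (u : ℕ → V) (k : ℕ), IsPath Arc u k ∧ u 0 = s ∧ u k = t ∧
    x = ((∑ i ∈ Finset.range k, c (u i) (u (i + 1)) : ℝ) : EReal) }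

/-- The graph has no negative cycles. -/
def NoNegCycles {V : Type*} (Arc : V → V → Prop) (c : V → V → ℝ) : Prop :=
  ∀ (u : ℕ → V) (k : ℕ), IsPath Arc u k → u k = u 0 → 1 ≤ k →
    0 ≤ ∑ i ∈ Finset.range k, c (u i) (u (i + 1))

section AuxLemmas

variable {B b : ℝ} {cst : ℕ → ℝ}

lemma batt_succ (B b : ℝ) (cst : ℕ → ℝ) (i : ℕ) :
    batt B b cst (i + 1) = min (batt B b cst i - cst i) B := rfl

lemma batt_zero (B b : ℝ) (cst : ℕ → ℝ) : batt B b cst 0 = b := rfl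

lemma batt_le (hb : b ≤ B) : ∀ j, batt B b cst j ≤ B
  | 0 => hb
  | _ + 1 => min_le_right _ _

lemma batt_nonneg (hB : 0 ≤ B) (hb : 0 ≤ b) {k : ℕ} (hT : Trav B b cst k) :
    ∀ i ≤ k, 0 ≤ batt B b cst i := by
  intro i
  induction i with
  | zero => intro _; exact hb
  | succ i ih =>
    intro hik
    have h1 : 0 ≤ batt B b cst i := ih (by omega)
    have h2 : cst i ≤ batt B b cst i := hT i (by omega)
    rw [batt_succ]
    exact le_min (by linarith) hB

lemma key_fwd (hB : 0 ≤ B) (hb0 : 0 ≤ b) (hbB : b ≤ B) {k : ℕ} (hT : Trav B b cst k) :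
    ∀ j ≤ k, B ≤ batt B b cst (k - j) + batt B B (fun j => cst (k - 1 - j)) j := by
  intro j
  induction j with
  | zero =>
    intro _
    have h0 := batt_nonneg hB hb0 hT k le_rfl
    have : batt B B (fun j => cst (k - 1 - j)) 0 = B := rfl
    rw [Nat.sub_zero, this]
    linarith
  | succ j ih =>
    intro hjk
    have hjk' : j < k := by omega
    have IH := ih (by omega)
    have e1 : k - j = (k - 1 - j) + 1 := by omega
    rw [e1, batt_succ] at IH
    have e2 : k - (j + 1) = k - 1 - j := by omega
    rw [e2, batt_succ]
    set i := k - 1 - j with hi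
    have hik : i < k := by omega
    have hcst : cst i ≤ batt B b cst i := hT i hik
    have h0i : 0 ≤ batt B b cst i := batt_nonneg hB hb0 hT i (by omega)
    have hm1 := min_le_left (batt B b cst i - cst i) B
    have hm2 := min_le_right (batt B b cst i - cst i) B
    rcases le_total (batt B B (fun j => cst (k - 1 - j)) j - cst i) B with h | h
    · rw [min_eq_left h]; linarith
    · rw [min_eq_right h]; linarith

lemma trav'_of_trav (hB : 0 ≤ B) (hb0 : 0 ≤ b) (hbB : b ≤ B) {k : ℕ}
    (hT : Trav B b cst k) : Trav B B (fun j => cst (k - 1 - j)) k := by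
  intro j hjk
  have H := key_fwd hB hb0 hbB hT (j + 1) (by omega)
  rw [batt_succ] at H
  have h1 : batt B b cst (k - (j + 1)) ≤ B := batt_le hbB _
  have h3 := min_le_left
    (batt B B (fun j => cst (k - 1 - j)) j - (fun j => cst (k - 1 - j)) j) B
  simp only at h3 ⊢
  linarith

lemma key_bwd (hB : 0 ≤ B) {k : ℕ} (hT' : Trav B B (fun j => cst (k - 1 - j)) k) :
    ∀ i ≤ k, B - batt B B (fun j => cst (k - 1 - j)) (k - i)
      ≤ batt B (B - batt B B (fun j => cst (k - 1 - j)) k) cst i := by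
  intro i
  induction i with
  | zero =>
    intro _
    rw [Nat.sub_zero, batt_zero]
  | succ i ih =>
    intro hik
    have hik' : i < k := by omega
    have IH := ih (by omega)
    set j := k - (i + 1) with hj
    have hjk : j < k := by omega
    have e1 : k - i = j + 1 := by omega
    have e2 : k - 1 - j = i := by omega
    rw [e1] at IH
    rw [batt_succ] at IH ⊢
    have hcst : cst i ≤ batt B B (fun j => cst (k - 1 - j)) j := by
      have := hT' j hjk
      simp only [e2] at this
      exact this
    have hβB : batt B B (fun j => cst (k - 1 - j)) j ≤ B := batt_le le_rfl _
    have hβ0 : 0 ≤ batt B B (fun j => cst (k - 1 - j)) j :=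
      batt_nonneg hB hB hT' j (by omega)
    have hm1 : min (batt B B (fun j => cst (k - 1 - j)) j
        - (fun j => cst (k - 1 - j)) j) B
        ≤ batt B B (fun j => cst (k - 1 - j)) j - cst i := by
      simp only [e2]
      exact min_le_left _ _
    apply le_min
    · linarith
    · linarith

lemma trav_of_trav' (hB : 0 ≤ B) {k : ℕ} (hT' : Trav B B (fun j => cst (k - 1 - j)) k) :
    Trav B (B - batt B B (fun j => cst (k - 1 - j)) k) cst k := by
  intro i hik
  have H := key_bwd hB hT' i (le_of_lt hik)
  set j := k - 1 - i with hj
  have e1 : k - i = j + 1 := by omega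
  have e2 : k - 1 - j = i := by omega
  rw [e1, batt_succ] at H
  have hβB : batt B B (fun j => cst (k - 1 - j)) j ≤ B := batt_le le_rfl _
  have hm1 : min (batt B B (fun j => cst (k - 1 - j)) j
      - (fun j => cst (k - 1 - j)) j) B
      ≤ batt B B (fun j => cst (k - 1 - j)) j - cst i := by
    simp only [e2]
    exact min_le_left _ _
  linarith

lemma batt_congr {cst1 cst2 : ℕ → ℝ} (B b : ℝ) {n : ℕ} (h : ∀ i < n, cst1 i = cst2 i) :
    batt B b cst1 n = batt B b cst2 n := by
  induction n with
  | zero => rfl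
  | succ n ih =>
    rw [batt_succ, batt_succ, ih (fun i hi => h i (by omega)), h n (by omega)]

lemma trav_congr {cst1 cst2 : ℕ → ℝ} (B b : ℝ) {k : ℕ} (h : ∀ i < k, cst1 i = cst2 i) :
    Trav B b cst1 k ↔ Trav B b cst2 k := by
  unfold Trav
  apply forall_congr'
  intro i
  constructor <;> intro H hik <;>
    [rw [← h i hik, ← batt_congr B b (fun j hj => h j (hj.trans hik))];
     rw [h i hik, batt_congr B b (fun j hj => h j (hj.trans hik))] ] <;>
    exact H hik

lemma dE_congr {cst1 cst2 : ℕ → ℝ} (B b : ℝ) {k : ℕ} (h : ∀ i < k, cst1 i = cst2 i) :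
    dE B b cst1 k = dE B b cst2 k := by
  unfold dE
  rw [batt_congr B b h]
  by_cases hT : Trav B b cst1 k
  · rw [if_pos hT, if_pos ((trav_congr B b h).mp hT)]
  · rw [if_neg hT, if_neg (fun h' => hT ((trav_congr B b h).mpr h'))]

lemma inner_eq (B : ℝ) (hB : 0 < B) (cst : ℕ → ℝ) (k : ℕ) :
    sInf {y : EReal | ∃ b : ℝ, 0 ≤ b ∧ b ≤ B ∧ Trav B b cst k ∧ y = ((b : ℝ) : EReal)}
      = dE B B (fun j => cst (k - 1 - j)) k := by
  by_cases hT' : Trav B B (fun j => cst (k - 1 - j)) k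
  · rw [dE, if_pos hT']
    have hβB : batt B B (fun j => cst (k - 1 - j)) k ≤ B := batt_le le_rfl _
    have hβ0 : 0 ≤ batt B B (fun j => cst (k - 1 - j)) k :=
      batt_nonneg hB.le hB.le hT' k le_rfl
    apply le_antisymm
    · apply sInf_le
      exact ⟨B - batt B B (fun j => cst (k - 1 - j)) k, by linarith, by linarith,
        trav_of_trav' hB.le hT', rfl⟩
    · apply le_sInf
      rintro y ⟨b, hb0, hbB, hT, rfl⟩
      have H := key_fwd hB.le hb0 hbB hT k le_rfl
      rw [Nat.sub_self, batt_zero] at H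
      exact EReal.coe_le_coe_iff.mpr (by linarith)
  · rw [dE, if_neg hT']
    apply le_antisymm le_top
    apply le_sInf
    rintro y ⟨b, hb0, hbB, hT, rfl⟩
    exact absurd (trav'_of_trav hB.le hb0 hbB hT) hT'

end AuxLemmas

/-- Corollary 2: the minimum initial charge `β_B(s,t)` required at `s`
for getting to `t` (the minimum over `s`–`t` paths `P` of the minimum initial charge
`b_B(P)`) equals the energetic cost `δ_B^{←G}(t,s)` of traveling from `t` to `s` in
the reversed graph. -/
theorem beta_eq_delta_reversed {V : Type*} [Fintype V] (Arc : V → V → Prop)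
    (c : V → V → ℝ) (B : ℝ) (hB : 0 < B) (s t : V) :
    sInf { x : EReal | ∃ (u : ℕ → V) (k : ℕ), IsPath Arc u k ∧ u 0 = s ∧ u k = t ∧
        x = sInf { y : EReal | ∃ b : ℝ, 0 ≤ b ∧ b ≤ B ∧
          Trav B b (fun i => c (u i) (u (i + 1))) k ∧ y = ((b : ℝ) : EReal) } } =
      deltaE (fun x y => Arc y x) (fun x y => c y x) B B t s := by
  unfold deltaE
  congr 1
  ext x
  simp only [Set.mem_setOf_eq]
  constructor
  · rintro ⟨u, k, hP, h0, hk, rfl⟩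
    refine ⟨fun j => u (k - j), k, ?_, ?_, ?_, ?_⟩
    · intro j hjk
      show Arc (u (k - (j + 1))) (u (k - j))
      rw [show k - (j + 1) = k - 1 - j from by omega,
        show k - j = (k - 1 - j) + 1 from by omega]
      exact hP (k - 1 - j) (by omega)
    · show u (k - 0) = t
      rw [Nat.sub_zero]; exact hk
    · show u (k - k) = s
      rw [Nat.sub_self]; exact h0
    · rw [inner_eq B hB (fun i => c (u i) (u (i + 1))) k]
      apply dE_congr
      intro i hik
      show c (u (k - 1 - i)) (u ((k - 1 - i) + 1)) = c (u (k - (i + 1))) (u (k - i))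
      rw [show k - (i + 1) = k - 1 - i from by omega,
        show k - i = (k - 1 - i) + 1 from by omega]
  · rintro ⟨v, k, hP, h0, hk, rfl⟩
    refine ⟨fun i => v (k - i), k, ?_, ?_, ?_, ?_⟩
    · intro i hik
      show Arc (v (k - i)) (v (k - (i + 1)))
      rw [show k - (i + 1) = k - 1 - i from by omega,
        show k - i = (k - 1 - i) + 1 from by omega]
      exact hP (k - 1 - i) (by omega)
    · show v (k - 0) = s
      rw [Nat.sub_zero]; exact hk
    · show v (k - k) = t
      rw [Nat.sub_self]; exact h0
    · rw [inner_eq B hB (fun i => c (v (k - i)) (v (k - (i + 1)))) k]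
      apply dE_congr
      intro i hik
      show c (v (i + 1)) (v i) = c (v (k - (k - 1 - i))) (v (k - ((k - 1 - i) + 1)))
      rw [show k - (k - 1 - i) = i + 1 from by omega,
        show k - ((k - 1 - i) + 1) = i from by omega]
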